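/- Let X be a random vector in ℝ^d such that X has the same distribution as μ + Ω Z, where μ ∈ ℝ^d, Ω ∈ ℝ^{d×d} is an orthogonal matrix, and Z is a sign-flip invariant random vector in ℝ^d. Let X̃ be an independent copy of X, and let Z̃ be an independent copy of Z. Then X − X̃ has the same distribution as Ω (Z − Z̃), and Z − Z̃ is sign-flip invariant; in particular, X − X̃ again satisfies Marden's model (with location 0). (Finite-dimensional content of the inclusion FCS ⊂ wFCS in Proposition 2.) -/

import Mathlib

open MeasureTheory ProbabilityTheory Matrix

/-- A random vector `Z` in `ℝ^n` is sign-flip invariant (coordinatewise symmetric) if for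
every vector of signs `ε ∈ {−1, 1}^n`, `(ε 1 Z 1, …, ε n Z n)` has the same distribution
as `Z`. -/
def SignFlipInvariant {Ω : Type*} [MeasurableSpace Ω] (P : Measure Ω) {n : ℕ}
    (Z : Ω → Fin n → ℝ) : Prop :=
  ∀ ε : Fin n → ℝ, (∀ i, ε i = 1 ∨ ε i = -1) →
    IdentDistrib (fun ω i => ε i * Z ω i) Z P P


lemma pair_identDistrib {Ω : Type*} [MeasurableSpace Ω] {P : Measure Ω}
    [IsProbabilityMeasure P] {β : Type*} [MeasurableSpace β]
    {f g f' g' : Ω → β} (hfg : IndepFun f g P) (hfg' : IndepFun f' g' P)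
    (hf : IdentDistrib f f' P P) (hg : IdentDistrib g g' P P) :
    IdentDistrib (fun ω => (f ω, g ω)) (fun ω => (f' ω, g' ω)) P P := by
  refine ⟨hf.aemeasurable_fst.prodMk hg.aemeasurable_fst,
    hf.aemeasurable_snd.prodMk hg.aemeasurable_snd, ?_⟩
  rw [(indepFun_iff_map_prod_eq_prod_map_map hf.aemeasurable_fst hg.aemeasurable_fst).mp hfg,
    (indepFun_iff_map_prod_eq_prod_map_map hf.aemeasurable_snd hg.aemeasurable_snd).mp hfg',
    hf.map_eq, hg.map_eq]

/-- finite-dimensional content of FCS ⊂ wFCS in Proposition 2. If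
`X =_D μ + O Z` with `O` orthogonal and `Z` sign-flip invariant, `X̃` an independent copy
of `X` and `Z̃` an independent copy of `Z`, then `X − X̃ =_D O (Z − Z̃)`, the difference
`Z − Z̃` is sign-flip invariant, and in particular `X − X̃` again satisfies Marden's model
with location `0`. -/
theorem marden_model_closed_under_pairwise_difference
    {Ω : Type*} [MeasurableSpace Ω] (P : Measure Ω) [IsProbabilityMeasure P]
    (d : ℕ) (X Xt Z Zt : Ω → Fin d → ℝ) (μ : Fin d → ℝ)
    (O : Matrix (Fin d) (Fin d) ℝ) (hO : Oᵀ * O = 1)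
    (hZ : SignFlipInvariant P Z)
    (hXlaw : IdentDistrib X (fun ω => μ + O.mulVec (Z ω)) P P)
    (hXindep : IndepFun X Xt P) (hXid : IdentDistrib X Xt P P)
    (hZindep : IndepFun Z Zt P) (hZid : IdentDistrib Z Zt P P) :
    IdentDistrib (fun ω => X ω - Xt ω) (fun ω => O.mulVec (Z ω - Zt ω)) P P ∧
      SignFlipInvariant P (fun ω => Z ω - Zt ω) ∧
      (∃ (O' : Matrix (Fin d) (Fin d) ℝ) (W : Ω → Fin d → ℝ),
        O'ᵀ * O' = 1 ∧ SignFlipInvariant P W ∧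
          IdentDistrib (fun ω => X ω - Xt ω)
            (fun ω => (0 : Fin d → ℝ) + O'.mulVec (W ω)) P P) := by

  -- measurability of auxiliary maps
  have hsub : Measurable (fun p : (Fin d → ℝ) × (Fin d → ℝ) => p.1 - p.2) :=
    measurable_fst.sub measurable_snd
  have hψm : Measurable (fun v : Fin d → ℝ => μ + O.mulVec v) := by
    have : Continuous (fun v : Fin d → ℝ => μ + O.mulVec v) :=
      continuous_const.add (O.mulVecLin.continuous_of_finiteDimensional)
    exact this.measurable
  -- part 1
  have hXtlaw : IdentDistrib Xt (fun ω => μ + O.mulVec (Zt ω)) P P :=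
    hXid.symm.trans (hXlaw.trans (hZid.comp hψm))
  have hYindep : IndepFun (fun ω => μ + O.mulVec (Z ω)) (fun ω => μ + O.mulVec (Zt ω)) P :=
    hZindep.comp hψm hψm
  have hpair := pair_identDistrib hXindep hYindep hXlaw hXtlaw
  have h1 : IdentDistrib (fun ω => X ω - Xt ω) (fun ω => O.mulVec (Z ω - Zt ω)) P P := by
    have := hpair.comp hsub
    simpa [Function.comp_def, Matrix.mulVec_sub, add_sub_add_left_eq_sub] using this
  -- part 2
  have h2 : SignFlipInvariant P (fun ω => Z ω - Zt ω) := by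
    intro ε hε
    have hφm : Measurable (fun v : Fin d → ℝ => fun i => ε i * v i) :=
      measurable_pi_lambda _ fun i => by fun_prop
    have hεZt : IdentDistrib (fun ω => fun i => ε i * Zt ω i) Zt P P :=
      ((hZid.symm.comp hφm).trans (hZ ε hε)).trans hZid
    have hεindep : IndepFun (fun ω => fun i => ε i * Z ω i)
        (fun ω => fun i => ε i * Zt ω i) P := hZindep.comp hφm hφm
    have hpair2 := pair_identDistrib hεindep hZindep (hZ ε hε) hεZt
    have := hpair2.comp hsub
    have heq1 : ((fun p : (Fin d → ℝ) × (Fin d → ℝ) => p.1 - p.2) ∘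
        fun ω => ((fun i => ε i * Z ω i), (fun i => ε i * Zt ω i)))
        = fun ω i => ε i * (Z ω - Zt ω) i := by
      funext ω i
      simp [Function.comp, mul_sub]
    have heq2 : ((fun p : (Fin d → ℝ) × (Fin d → ℝ) => p.1 - p.2) ∘
        fun ω => (Z ω, Zt ω)) = fun ω => Z ω - Zt ω := rfl
    rw [heq1, heq2] at this
    exact this
  refine ⟨h1, h2, O, fun ω => Z ω - Zt ω, hO, h2, ?_⟩
  simpa [zero_add] using h1
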